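/- Minimal period criterion: suppose ψ(x) = (1/2)∫₀ᵀ|ẋ|²dt - ∫₀ᵀ V(x)dt on a subspace E of T-periodic W^{1,2} functions that is invariant under the rescaling x(t) ↦ x(t/k) for integers k ≥ 1 (applied to T/k-periodic elements). If x̄ ∈ E is a nonconstant critical point of ψ satisfying ψ(x̄) = max_{s≥0} ψ(s x̄) = inf_{‖e‖=1} max_{s≥0} ψ(s e), then x̄ cannot have period T/k for any integer k ≥ 2; that is, the minimal period of x̄ is T. -/

import Mathlib

open MeasureTheory intervalIntegral

private lemma periodic_deriv' {F : Type*} [NormedAddCommGroup F] [NormedSpace ℝ F]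
    (f : ℝ → F) {c : ℝ} (h : Function.Periodic f c) : Function.Periodic (deriv f) c := by
  intro t
  have hfc : (fun s => f (s + c)) = f := funext h
  calc deriv f (t + c) = deriv (fun s => f (s + c)) t := (deriv_comp_add_const f c t).symm
    _ = deriv f t := by rw [hfc]

private lemma per_int (f : ℝ → ℝ) (hf : Continuous f) {c : ℝ} (k : ℕ)
    (hc : Function.Periodic f c) :
    ∫ t in (0:ℝ)..(k*c), f t = k * ∫ t in (0:ℝ)..c, f t := by
  have h_int : ∀ t₁ t₂ : ℝ, IntervalIntegrable f MeasureSpace.volume t₁ t₂ :=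
    fun t₁ t₂ => hf.intervalIntegrable t₁ t₂
  have := hc.intervalIntegral_add_zsmul_eq (k : ℤ) 0 h_int
  simpa [zsmul_eq_mul] using this

private lemma comp_div_int (f : ℝ → ℝ) (hf : Continuous f) {T : ℝ} (k : ℕ)
    (hk : 0 < k) (hper : Function.Periodic f (T / k)) :
    ∫ t in (0:ℝ)..T, f (t / k) = ∫ t in (0:ℝ)..T, f t := by
  have hk0 : (k:ℝ) ≠ 0 := Nat.cast_ne_zero.mpr hk.ne'
  rw [intervalIntegral.integral_comp_div (f := f) hk0, zero_div]
  have h2 := per_int f hf k hper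
  rw [mul_div_cancel₀ T hk0] at h2
  rw [h2, smul_eq_mul]

theorem stmt_10 (T : ℝ) (hT : 0 < T) (N : ℕ)
    (V : EuclideanSpace ℝ (Fin N) → ℝ) (hV : Continuous V) (hV0 : V 0 = 0)
    (E : Set (ℝ → EuclideanSpace ℝ (Fin N)))
    (hE : ∀ x ∈ E, ContDiff ℝ 1 x ∧ Function.Periodic x T)
    (hsmul : ∀ x ∈ E, ∀ c : ℝ, c • x ∈ E)
    (hresc : ∀ x ∈ E, ∀ k : ℕ, 2 ≤ k → Function.Periodic x (T / k) →
      (fun t => x (t / k)) ∈ E)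
    (ψ : (ℝ → EuclideanSpace ℝ (Fin N)) → ℝ)
    (hψ : ∀ x, ψ x = (1/2) * (∫ t in (0:ℝ)..T, ‖deriv x t‖ ^ 2) -
      ∫ t in (0:ℝ)..T, V (x t))
    (xbar : ℝ → EuclideanSpace ℝ (Fin N)) (hx : xbar ∈ E)
    (hnc : ¬ ∀ s t : ℝ, xbar s = xbar t)
    (hpos : 0 < ψ xbar)
    (hmax : ∀ s : ℝ, 0 ≤ s → ψ (s • xbar) ≤ ψ xbar)
    (hinf : ∀ e ∈ E, e ≠ 0 → ∃ s : ℝ, 0 ≤ s ∧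
      (∀ s' : ℝ, 0 ≤ s' → ψ (s' • e) ≤ ψ (s • e)) ∧ ψ xbar ≤ ψ (s • e)) :
    ¬ ∃ k : ℕ, 2 ≤ k ∧ Function.Periodic xbar (T / k) := by
  rintro ⟨k, hk2, hper⟩
  obtain ⟨hxc, hxT⟩ := hE xbar hx
  have hkpos : 0 < k := lt_of_lt_of_le (by norm_num) hk2
  have hk0 : (k:ℝ) ≠ 0 := Nat.cast_ne_zero.mpr hkpos.ne'
  have hk1 : (1:ℝ) < k := by exact_mod_cast lt_of_lt_of_le (by norm_num) hk2
  have hdiff : Differentiable ℝ xbar := hxc.differentiable one_ne_zero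
  have hderivC : Continuous (deriv xbar) := hxc.continuous_deriv le_rfl
  set y : ℝ → EuclideanSpace ℝ (Fin N) := fun t => xbar (t / k) with hy
  have hyE : y ∈ E := hresc xbar hx k hk2 hper
  -- y is nonzero
  have hy0 : y ≠ 0 := by
    intro h0
    apply hnc
    intro s t
    have hs : xbar s = 0 := by
      have h1 := congrFun h0 (s * k)
      simp only [hy, Pi.zero_apply] at h1
      rwa [mul_div_cancel_right₀ s hk0] at h1
    have ht : xbar t = 0 := by
      have h1 := congrFun h0 (t * k)
      simp only [hy, Pi.zero_apply] at h1
      rwa [mul_div_cancel_right₀ t hk0] at h1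
    rw [hs, ht]
  -- kinetic energy
  set K : ℝ := ∫ t in (0:ℝ)..T, ‖deriv xbar t‖ ^ 2 with hK
  have hgC : Continuous (fun t => ‖deriv xbar t‖ ^ 2) := (hderivC.norm).pow 2
  have hdper : Function.Periodic (deriv xbar) (T / k) := periodic_deriv' xbar hper
  -- K > 0
  have hKpos : 0 < K := by
    have hne : ∃ t₁ : ℝ, deriv xbar t₁ ≠ 0 := by
      by_contra h
      push_neg at h
      exact hnc (is_const_of_deriv_eq_zero hdiff h)
    obtain ⟨t₁, ht₁⟩ := hne
    have hdT : Function.Periodic (deriv xbar) T := periodic_deriv' xbar hxT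
    set t₀ : ℝ := t₁ - (⌊t₁ / T⌋ : ℤ) * T with ht₀
    have ht₀mem : t₀ ∈ Set.Icc (0:ℝ) T :=
      ⟨Int.sub_floor_div_mul_nonneg t₁ hT, (Int.sub_floor_div_mul_lt t₁ hT).le⟩
    have hval : deriv xbar t₀ = deriv xbar t₁ := hdT.sub_int_mul_eq ⌊t₁ / T⌋
    refine intervalIntegral.integral_pos hT hgC.continuousOn (fun x _ => sq_nonneg _) ?_
    exact ⟨t₀, ht₀mem, by rw [hval]; exact pow_pos (norm_pos_iff.mpr ht₁) 2⟩
  -- derivative of y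
  have hdy : ∀ t : ℝ, deriv y t = (k:ℝ)⁻¹ • deriv xbar (t / k) := by
    intro t
    have h1 : HasDerivAt (fun t : ℝ => t / k) ((k:ℝ)⁻¹) t := by
      simpa [one_div] using (hasDerivAt_id t).div_const (k:ℝ)
    have h2 : HasDerivAt y ((k:ℝ)⁻¹ • deriv xbar (t / k)) t :=
      ((hdiff (t / k)).hasDerivAt).scomp t h1
    exact h2.deriv
  -- kinetic energy of s • y and s • xbar
  have hkin_smul : ∀ s : ℝ, ∀ x : ℝ → EuclideanSpace ℝ (Fin N), Differentiable ℝ x →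
      ∀ t : ℝ, ‖deriv (s • x) t‖ ^ 2 = s ^ 2 * ‖deriv x t‖ ^ 2 := by
    intro s x hdx t
    have : deriv (s • x) t = s • deriv x t := by
      have := ((hdx t).hasDerivAt.const_smul s).deriv
      simpa using this
    rw [this, norm_smul]
    simp [mul_pow, Real.norm_eq_abs, sq_abs]
  have hdiffy : Differentiable ℝ y := by
    intro t
    exact ((hdiff (t / k)).hasDerivAt.scomp t
      (by simpa [one_div] using (hasDerivAt_id t).div_const (k:ℝ))).differentiableAt
  -- formula for psi on multiples of xbar
  have hpsix : ∀ s : ℝ, ψ (s • xbar) =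
      (1/2) * (s ^ 2 * K) - ∫ t in (0:ℝ)..T, V (s • xbar t) := by
    intro s
    rw [hψ]
    have hker : (∫ t in (0:ℝ)..T, ‖deriv (s • xbar) t‖ ^ 2) = s ^ 2 * K := by
      rw [hK, ← intervalIntegral.integral_const_mul]
      exact intervalIntegral.integral_congr fun t _ => hkin_smul s xbar hdiff t
    rw [hker]; rfl
  -- formula for psi on multiples of y
  have hpsiy : ∀ s : ℝ, ψ (s • y) =
      (1/2) * (s ^ 2 * ((k:ℝ)⁻¹ ^ 2 * K)) - ∫ t in (0:ℝ)..T, V (s • xbar t) := by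
    intro s
    rw [hψ]
    have hpot : (∫ t in (0:ℝ)..T, V ((s • y) t)) = ∫ t in (0:ℝ)..T, V (s • xbar t) := by
      have hVper : Function.Periodic (fun t => V (s • xbar t)) (T / k) :=
        fun t => by simp [hper t]
      have hVC : Continuous (fun t => V (s • xbar t)) :=
        hV.comp ((continuous_const (y := s)).smul hxc.continuous)
      have hcd := comp_div_int _ hVC k hkpos hVper
      calc (∫ t in (0:ℝ)..T, V ((s • y) t))
          = ∫ t in (0:ℝ)..T, (fun u => V (s • xbar u)) (t / k) :=
            intervalIntegral.integral_congr fun t _ => rfl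
        _ = ∫ t in (0:ℝ)..T, V (s • xbar t) := hcd
    have h1 : ∀ t : ℝ, ‖deriv (s • y) t‖ ^ 2
        = s ^ 2 * ((k:ℝ)⁻¹ ^ 2 * ‖deriv xbar (t / k)‖ ^ 2) := by
      intro t
      rw [hkin_smul s y hdiffy t, hdy t, norm_smul]
      simp only [Real.norm_eq_abs, mul_pow, sq_abs]
    have h2 : (∫ t in (0:ℝ)..T, ‖deriv (s • y) t‖ ^ 2)
        = s ^ 2 * ((k:ℝ)⁻¹ ^ 2 * ∫ t in (0:ℝ)..T, ‖deriv xbar (t / k)‖ ^ 2) := by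
      rw [← intervalIntegral.integral_const_mul, ← intervalIntegral.integral_const_mul]
      refine intervalIntegral.integral_congr fun t _ => ?_
      rw [h1 t]
    rw [h2, comp_div_int _ hgC k hkpos (fun t => by rw [hdper t]), ← hK, hpot]
  -- apply the inf-max property to y
  obtain ⟨s, hs0, -, hle⟩ := hinf y hyE hy0
  have h1 : ψ (s • y) = ψ (s • xbar) - (1/2) * (s ^ 2 * K) * (1 - (k:ℝ)⁻¹ ^ 2) := by
    rw [hpsiy s, hpsix s]; ring
  have hfac : 0 < 1 - (k:ℝ)⁻¹ ^ 2 := by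
    have : (k:ℝ)⁻¹ < 1 := by
      rw [inv_lt_one_iff₀]; right; exact hk1
    have h0 : 0 < (k:ℝ)⁻¹ := by positivity
    nlinarith
  have hchain : ψ xbar ≤ ψ xbar - (1/2) * (s ^ 2 * K) * (1 - (k:ℝ)⁻¹ ^ 2) :=
    hle.trans (by rw [h1]; linarith [hmax s hs0])
  have hs2 : s ^ 2 * K ≤ 0 := by nlinarith
  have hszero : s = 0 := by
    have hs2' : s ^ 2 = 0 := le_antisymm (by nlinarith) (sq_nonneg s)
    exact pow_eq_zero_iff (two_ne_zero) |>.mp hs2'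
  -- but ψ (0 • y) = 0, contradicting hpos
  have hzero : ψ ((0:ℝ) • y) = 0 := by
    rw [zero_smul, hψ]
    have hd : ∀ t : ℝ, deriv (0 : ℝ → EuclideanSpace ℝ (Fin N)) t = 0 := by
      intro t
      exact deriv_const t 0
    simp [hd, hV0]
  rw [hszero, hzero] at hle
  linarith
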